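/- In the network setup, suppose c_j ≠ 0 for every j ∈ J and I₀ᶜ := {i ∈ I : c_i ≠ 0} is nonempty, and suppose the end states satisfy f_j(ℓ_j^±) = Σ_{i∈I} α_{i,j} f_i(L_{i,j}^±) for every j ∈ J. Set c_{i,j} = c_i/c_j, A_{i,j} = α_{i,j} c_{i,j} and k_j = Σ_{i∈I₀ᶜ} A_{i,j} L_{i,j}⁻ − ℓ_j⁻. Then, for any family of profiles (φ_h)_{h∈H}, the coupling condition (Tool) holds if and only if for every j ∈ J and every ξ ∈ ℝ: φ_j(ξ) = Σ_{i∈I₀ᶜ} A_{i,j} φ_i(c_{i,j} ξ) − k_j. -/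

import Mathlib

open Set Filter MeasureTheory
open scoped Topology Classical

/-- Assumption (f): `f ∈ C¹([0,1];ℝ)` is nonnegative, strictly concave, `f 0 = f 1 = 0`. -/
def FluxAssumption (f : ℝ → ℝ) : Prop :=
  ContDiffOn ℝ 1 f (Icc 0 1) ∧ StrictConcaveOn ℝ (Icc 0 1) f ∧
  (∀ x ∈ Icc (0:ℝ) 1, 0 ≤ f x) ∧ f 0 = 0 ∧ f 1 = 0

/-- Assumption (D): `D ∈ C¹([0,1];ℝ)` is nonnegative and positive on `(0,1)`. -/
def DiffAssumption (D : ℝ → ℝ) : Prop :=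
  ContDiffOn ℝ 1 D (Icc 0 1) ∧ (∀ x ∈ Icc (0:ℝ) 1, 0 ≤ D x) ∧
  (∀ x ∈ Ioo (0:ℝ) 1, 0 < D x)

/-- The wave speed `c = (f(ℓ⁺) - f(ℓ⁻))/(ℓ⁺ - ℓ⁻)`. -/
noncomputable def waveSpeed (f : ℝ → ℝ) (a b : ℝ) : ℝ := (f b - f a) / (b - a)

/-- The reduced flux `g(ρ) = f(ρ) - c ρ`. -/
noncomputable def redFlux (f : ℝ → ℝ) (a b ρ : ℝ) : ℝ := f ρ - waveSpeed f a b * ρ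

/-- A profile for data `f, D, ℓ⁻ = a, ℓ⁺ = b`: continuous, non-decreasing, with values in
`[a,b]`, limits `a` at `-∞` and `b` at `+∞`, `C²` on `I = {ξ | a < φ ξ < b}` with positive
derivative there, satisfying `D(φ) φ' = g(φ) - g(a)` on `I`. -/
def IsProfile (f D : ℝ → ℝ) (a b : ℝ) (φ : ℝ → ℝ) : Prop :=
  Continuous φ ∧ Monotone φ ∧ (∀ ξ, φ ξ ∈ Icc a b) ∧
  Tendsto φ atBot (𝓝 a) ∧ Tendsto φ atTop (𝓝 b) ∧
  ContDiffOn ℝ 2 φ {ξ | a < φ ξ ∧ φ ξ < b} ∧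
  ∀ ξ, a < φ ξ → φ ξ < b →
    0 < deriv φ ξ ∧ D (φ ξ) * deriv φ ξ = redFlux f a b (φ ξ) - redFlux f a b a

/-- Speed of road `h` given end–state functions. -/
noncomputable def spd {H : Type*} (f : H → ℝ → ℝ) (lm lp : H → ℝ) (h : H) : ℝ :=
  waveSpeed (f h) (lm h) (lp h)

/-- Reduced flux of road `h` given end–state functions. -/
noncomputable def gred {H : Type*} (f : H → ℝ → ℝ) (lm lp : H → ℝ) (h : H) (ρ : ℝ) : ℝ :=
  redFlux (f h) (lm h) (lp h) ρ

/-- The network setup: flux/diffusivity assumptions on each road, and coefficients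
`α i j ∈ (0,1]` with unit row sums. -/
def NetworkSetup {m n : ℕ} (f D : Fin m ⊕ Fin n → ℝ → ℝ) (α : Fin m → Fin n → ℝ) : Prop :=
  (∀ h, FluxAssumption (f h)) ∧ (∀ h, DiffAssumption (D h)) ∧
  (∀ i j, α i j ∈ Ioc (0:ℝ) 1) ∧ (∀ i, ∑ j, α i j = 1)

/-- Admissible end states: `0 ≤ ℓ_h⁻ < ℓ_h⁺ ≤ 1` for every road. -/
def EndStates {H : Type*} (lm lp : H → ℝ) : Prop :=
  ∀ h, 0 ≤ lm h ∧ lm h < lp h ∧ lp h ≤ 1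

/-- The coupling condition (Tool):
`c_j φ_j(c_j t) + g_j(ℓ_j⁻) = ∑_i α_{i,j} (c_i φ_i(c_i t) + g_i(ℓ_i⁻))` for all `t, j`. -/
def Tool {m n : ℕ} (f : Fin m ⊕ Fin n → ℝ → ℝ) (α : Fin m → Fin n → ℝ)
    (lm lp : Fin m ⊕ Fin n → ℝ) (φ : Fin m ⊕ Fin n → ℝ → ℝ) : Prop :=
  ∀ t : ℝ, ∀ j : Fin n,
    spd f lm lp (Sum.inr j) * φ (Sum.inr j) (spd f lm lp (Sum.inr j) * t)
      + gred f lm lp (Sum.inr j) (lm (Sum.inr j))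
    = ∑ i : Fin m, α i j *
        (spd f lm lp (Sum.inl i) * φ (Sum.inl i) (spd f lm lp (Sum.inl i) * t)
          + gred f lm lp (Sum.inl i) (lm (Sum.inl i)))

/-- A traveling wave of the network problem at profile level: a family of profiles
satisfying the coupling condition (Tool). -/
def IsTravelingWave {m n : ℕ} (f D : Fin m ⊕ Fin n → ℝ → ℝ) (α : Fin m → Fin n → ℝ)
    (lm lp : Fin m ⊕ Fin n → ℝ) (φ : Fin m ⊕ Fin n → ℝ → ℝ) : Prop :=
  (∀ h, IsProfile (f h) (D h) (lm h) (lp h) (φ h)) ∧ Tool f α lm lp φ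

/-- `L_{i,j}⁻`: `ℓ_i⁻` if `c_i c_j ≥ 0`, and `ℓ_i⁺` otherwise. -/
noncomputable def Lminus {m n : ℕ} (f : Fin m ⊕ Fin n → ℝ → ℝ)
    (lm lp : Fin m ⊕ Fin n → ℝ) (i : Fin m) (j : Fin n) : ℝ :=
  if 0 ≤ spd f lm lp (Sum.inl i) * spd f lm lp (Sum.inr j) then lm (Sum.inl i)
  else lp (Sum.inl i)

/-- `L_{i,j}⁺`: `ℓ_i⁺` if `c_i c_j ≥ 0`, and `ℓ_i⁻` otherwise. -/
noncomputable def Lplus {m n : ℕ} (f : Fin m ⊕ Fin n → ℝ → ℝ)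
    (lm lp : Fin m ⊕ Fin n → ℝ) (i : Fin m) (j : Fin n) : ℝ :=
  if 0 ≤ spd f lm lp (Sum.inl i) * spd f lm lp (Sum.inr j) then lp (Sum.inl i)
  else lm (Sum.inl i)

/-- `k_j = ∑_{i ∈ I₀ᶜ} A_{i,j} L_{i,j}⁻ - ℓ_j⁻` with `A_{i,j} = α_{i,j} c_i / c_j`. -/
noncomputable def kconst {m n : ℕ} (f : Fin m ⊕ Fin n → ℝ → ℝ) (α : Fin m → Fin n → ℝ)
    (lm lp : Fin m ⊕ Fin n → ℝ) (j : Fin n) : ℝ :=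
  (∑ i ∈ Finset.univ.filter (fun i : Fin m => spd f lm lp (Sum.inl i) ≠ 0),
      (α i j * (spd f lm lp (Sum.inl i) / spd f lm lp (Sum.inr j))) * Lminus f lm lp i j)
    - lm (Sum.inr j)

/-- In the non-stationary case, the coupling condition (Tool) is equivalent to the explicit
representation of the outgoing profiles in terms of the incoming ones. -/
theorem stmt12 (m n : ℕ) (hm : 0 < m) (hn : 0 < n)
    (f D : Fin m ⊕ Fin n → ℝ → ℝ) (α : Fin m → Fin n → ℝ)
    (hnet : NetworkSetup f D α)
    (lm lp : Fin m ⊕ Fin n → ℝ) (hends : EndStates lm lp)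
    (hcj : ∀ j : Fin n, spd f lm lp (Sum.inr j) ≠ 0)
    (hI0c : ∃ i : Fin m, spd f lm lp (Sum.inl i) ≠ 0)
    (hfjm : ∀ j : Fin n, f (Sum.inr j) (lm (Sum.inr j))
      = ∑ i : Fin m, α i j * f (Sum.inl i) (Lminus f lm lp i j))
    (hfjp : ∀ j : Fin n, f (Sum.inr j) (lp (Sum.inr j))
      = ∑ i : Fin m, α i j * f (Sum.inl i) (Lplus f lm lp i j))
    (φ : Fin m ⊕ Fin n → ℝ → ℝ)
    (hφ : ∀ h, IsProfile (f h) (D h) (lm h) (lp h) (φ h)) :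
    Tool f α lm lp φ ↔
      ∀ (j : Fin n) (ξ : ℝ),
        φ (Sum.inr j) ξ =
          (∑ i ∈ Finset.univ.filter (fun i : Fin m => spd f lm lp (Sum.inl i) ≠ 0),
            (α i j * (spd f lm lp (Sum.inl i) / spd f lm lp (Sum.inr j))) *
              φ (Sum.inl i) ((spd f lm lp (Sum.inl i) / spd f lm lp (Sum.inr j)) * ξ))
          - kconst f α lm lp j := by

  classical
  have hLm : ∀ (i : Fin m) (j : Fin n),
      f (Sum.inl i) (lm (Sum.inl i)) - spd f lm lp (Sum.inl i) * lm (Sum.inl i)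
        = f (Sum.inl i) (Lminus f lm lp i j)
          - spd f lm lp (Sum.inl i) * Lminus f lm lp i j := by
    intro i j
    unfold Lminus
    split_ifs with h
    · rfl
    · have hlt := (hends (Sum.inl i)).2.1
      have hne : lp (Sum.inl i) - lm (Sum.inl i) ≠ 0 := sub_ne_zero.2 hlt.ne'
      have hs : spd f lm lp (Sum.inl i)
          = (f (Sum.inl i) (lp (Sum.inl i)) - f (Sum.inl i) (lm (Sum.inl i)))
            / (lp (Sum.inl i) - lm (Sum.inl i)) := rfl
      rw [hs]
      field_simp
      ring
  have key : ∀ (j : Fin n) (x : ℝ),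
      (∑ i : Fin m, α i j *
        (spd f lm lp (Sum.inl i) *
            φ (Sum.inl i) ((spd f lm lp (Sum.inl i) / spd f lm lp (Sum.inr j)) * x)
          + gred f lm lp (Sum.inl i) (lm (Sum.inl i))))
      = spd f lm lp (Sum.inr j) *
          ((∑ i ∈ Finset.univ.filter (fun i : Fin m => spd f lm lp (Sum.inl i) ≠ 0),
              (α i j * (spd f lm lp (Sum.inl i) / spd f lm lp (Sum.inr j))) *
                φ (Sum.inl i) ((spd f lm lp (Sum.inl i) / spd f lm lp (Sum.inr j)) * x))
            - kconst f α lm lp j)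
        + gred f lm lp (Sum.inr j) (lm (Sum.inr j)) := by
    intro j x
    have hc := hcj j
    have h1 : spd f lm lp (Sum.inr j) *
        (∑ i ∈ Finset.univ.filter (fun i : Fin m => spd f lm lp (Sum.inl i) ≠ 0),
          (α i j * (spd f lm lp (Sum.inl i) / spd f lm lp (Sum.inr j))) *
            φ (Sum.inl i) ((spd f lm lp (Sum.inl i) / spd f lm lp (Sum.inr j)) * x))
        = ∑ i : Fin m, α i j * (spd f lm lp (Sum.inl i) *
            φ (Sum.inl i) ((spd f lm lp (Sum.inl i) / spd f lm lp (Sum.inr j)) * x)) := by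
      rw [Finset.sum_filter_of_ne (f := fun i : Fin m =>
          (α i j * (spd f lm lp (Sum.inl i) / spd f lm lp (Sum.inr j))) *
            φ (Sum.inl i) ((spd f lm lp (Sum.inl i) / spd f lm lp (Sum.inr j)) * x))
          (fun i _ hi hzero => by simp [hzero] at hi)]
      rw [Finset.mul_sum]
      refine Finset.sum_congr rfl fun i _ => ?_
      field_simp
    have h2 : spd f lm lp (Sum.inr j) * kconst f α lm lp j
        = (∑ i : Fin m, α i j * (spd f lm lp (Sum.inl i) * Lminus f lm lp i j))
          - spd f lm lp (Sum.inr j) * lm (Sum.inr j) := by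
      unfold kconst
      rw [Finset.sum_filter_of_ne (f := fun i : Fin m =>
          (α i j * (spd f lm lp (Sum.inl i) / spd f lm lp (Sum.inr j))) * Lminus f lm lp i j)
          (fun i _ hi hzero => by simp [hzero] at hi)]
      rw [mul_sub, Finset.mul_sum]
      congr 1
      refine Finset.sum_congr rfl fun i _ => ?_
      field_simp
    rw [mul_sub, h1, h2]
    have hg : ∀ (h : Fin m ⊕ Fin n) (ρ : ℝ),
        gred f lm lp h ρ = f h ρ - spd f lm lp h * ρ := fun h ρ => rfl
    simp only [hg]
    rw [hfjm j]
    have : ∀ i : Fin m,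
        α i j * (spd f lm lp (Sum.inl i) *
            φ (Sum.inl i) ((spd f lm lp (Sum.inl i) / spd f lm lp (Sum.inr j)) * x)
          + (f (Sum.inl i) (lm (Sum.inl i)) - spd f lm lp (Sum.inl i) * lm (Sum.inl i)))
        = α i j * (spd f lm lp (Sum.inl i) *
            φ (Sum.inl i) ((spd f lm lp (Sum.inl i) / spd f lm lp (Sum.inr j)) * x))
          - α i j * (spd f lm lp (Sum.inl i) * Lminus f lm lp i j)
          + α i j * f (Sum.inl i) (Lminus f lm lp i j) := by
      intro i
      rw [hLm i j]
      ring
    rw [Finset.sum_congr rfl fun i _ => this i]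
    rw [Finset.sum_add_distrib, Finset.sum_sub_distrib]
    ring
  constructor
  · intro htool j ξ
    have hc := hcj j
    have h := htool (ξ / spd f lm lp (Sum.inr j)) j
    have hξ : spd f lm lp (Sum.inr j) * (ξ / spd f lm lp (Sum.inr j)) = ξ := by
      field_simp
    rw [hξ] at h
    have hsum : (∑ i : Fin m, α i j *
        (spd f lm lp (Sum.inl i) *
            φ (Sum.inl i) (spd f lm lp (Sum.inl i) * (ξ / spd f lm lp (Sum.inr j)))
          + gred f lm lp (Sum.inl i) (lm (Sum.inl i))))
        = ∑ i : Fin m, α i j *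
        (spd f lm lp (Sum.inl i) *
            φ (Sum.inl i) ((spd f lm lp (Sum.inl i) / spd f lm lp (Sum.inr j)) * ξ)
          + gred f lm lp (Sum.inl i) (lm (Sum.inl i))) := by
      refine Finset.sum_congr rfl fun i _ => ?_
      rw [show spd f lm lp (Sum.inl i) * (ξ / spd f lm lp (Sum.inr j))
          = (spd f lm lp (Sum.inl i) / spd f lm lp (Sum.inr j)) * ξ by ring]
    rw [hsum, key j ξ] at h
    have h' := add_right_cancel h
    have := mul_left_cancel₀ hc h'
    rw [this]
  · intro hrep t j
    have hc := hcj j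
    have hsum : (∑ i : Fin m, α i j *
        (spd f lm lp (Sum.inl i) * φ (Sum.inl i) (spd f lm lp (Sum.inl i) * t)
          + gred f lm lp (Sum.inl i) (lm (Sum.inl i))))
        = ∑ i : Fin m, α i j *
        (spd f lm lp (Sum.inl i) *
            φ (Sum.inl i) ((spd f lm lp (Sum.inl i) / spd f lm lp (Sum.inr j)) *
              (spd f lm lp (Sum.inr j) * t))
          + gred f lm lp (Sum.inl i) (lm (Sum.inl i))) := by
      refine Finset.sum_congr rfl fun i _ => ?_
      rw [show (spd f lm lp (Sum.inl i) / spd f lm lp (Sum.inr j)) *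
          (spd f lm lp (Sum.inr j) * t) = spd f lm lp (Sum.inl i) * t by
        field_simp]
    rw [hsum, key j (spd f lm lp (Sum.inr j) * t),
      hrep j (spd f lm lp (Sum.inr j) * t)]
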